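/- Let X be a real Hilbert space and σ : X → X a continuous monotone operator (i.e., ⟨σ(x) − σ(y), x − y⟩ ≥ 0 for all x, y ∈ X) that maps bounded sets to bounded sets. Then the map H : X → X defined by H(x) := x + σ(x) is a bijection from X onto X admitting a continuous inverse H⁻¹ : X → X. -/

import Mathlib

open scoped RealInnerProductSpace
open Bornology

section Aux

variable {X : Type*} [NormedAddCommGroup X] [InnerProductSpace ℝ X]

/-- Quadratic identity for convex combinations. -/
lemma minty_sum_identity (s : Finset X) (lam : X → ℝ) (c : X → X)
    (h1 : ∑ y ∈ s, lam y = 1) :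
    ∑ y ∈ s, ∑ y' ∈ s, lam y * lam y' * ‖c y - c y'‖ ^ 2
      = 2 * ∑ y ∈ s, lam y * ‖c y‖ ^ 2 - 2 * ‖∑ y ∈ s, lam y • c y‖ ^ 2 := by
  have hA : ∑ y ∈ s, ∑ y' ∈ s, lam y * lam y' * ‖c y‖ ^ 2
      = ∑ y ∈ s, lam y * ‖c y‖ ^ 2 := by
    refine Finset.sum_congr rfl fun y _ => ?_
    have : ∑ y' ∈ s, lam y * lam y' * ‖c y‖ ^ 2
        = (lam y * ‖c y‖ ^ 2) * ∑ y' ∈ s, lam y' := by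
      rw [Finset.mul_sum]
      exact Finset.sum_congr rfl fun y' _ => by ring
    rw [this, h1, mul_one]
  have hB : ∑ y ∈ s, ∑ y' ∈ s, lam y * lam y' * ‖c y'‖ ^ 2
      = ∑ y ∈ s, lam y * ‖c y‖ ^ 2 := by
    have : ∀ y ∈ s, ∑ y' ∈ s, lam y * lam y' * ‖c y'‖ ^ 2
        = lam y * ∑ y' ∈ s, lam y' * ‖c y'‖ ^ 2 := by
      intro y _
      rw [Finset.mul_sum]
      exact Finset.sum_congr rfl fun y' _ => by ring
    rw [Finset.sum_congr rfl this, ← Finset.sum_mul, h1, one_mul]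
  have hC : ∑ y ∈ s, ∑ y' ∈ s, lam y * lam y' * ⟪c y, c y'⟫
      = ‖∑ y ∈ s, lam y • c y‖ ^ 2 := by
    rw [← real_inner_self_eq_norm_sq, sum_inner]
    refine Finset.sum_congr rfl fun y _ => ?_
    rw [inner_sum]
    refine Finset.sum_congr rfl fun y' _ => ?_
    rw [real_inner_smul_left, real_inner_smul_right]
    ring
  have hsplit : ∑ y ∈ s, ∑ y' ∈ s, lam y * lam y' * ‖c y - c y'‖ ^ 2
      = (∑ y ∈ s, ∑ y' ∈ s, lam y * lam y' * ‖c y‖ ^ 2)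
        + (∑ y ∈ s, ∑ y' ∈ s, lam y * lam y' * ‖c y'‖ ^ 2)
        - 2 * ∑ y ∈ s, ∑ y' ∈ s, lam y * lam y' * ⟪c y, c y'⟫ := by
    simp only [Finset.mul_sum, ← Finset.sum_add_distrib, ← Finset.sum_sub_distrib]
    refine Finset.sum_congr rfl fun y _ => Finset.sum_congr rfl fun y' _ => ?_
    rw [norm_sub_sq_real]
    ring
  rw [hsplit, hA, hB, hC]
  ring

/-- Finite one-point Kirszbraun lemma: given a "nonexpansive correspondence"
`p x ↦ q x` and a point `z`, the balls `B(q x, ‖z - p x‖)`, `x ∈ s`, have a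
common point. -/
lemma minty_finite_balls [CompleteSpace X] (z : X) (p q : X → X)
    (hpq : ∀ a b : X, ‖q a - q b‖ ≤ ‖p a - p b‖) (s : Finset X) :
    ∃ w : X, ∀ x ∈ s, ‖w - q x‖ ≤ ‖z - p x‖ := by
  classical
  rcases s.eq_empty_or_nonempty with rfl | hs
  · exact ⟨0, by simp⟩
  set r : X → ℝ := fun x => ‖z - p x‖ with hr
  set g : X → X → ℝ := fun w x => ‖w - q x‖ ^ 2 - r x ^ 2 with hg
  set f : X → ℝ := fun w => s.sup' hs (fun x => g w x) with hf
  set K : Set X := convexHull ℝ (↑(s.image q)) with hK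
  have hKcpt : IsCompact K := (s.image q).finite_toSet.isCompact_convexHull ℝ
  have hKconv : Convex ℝ K := convex_convexHull _ _
  have hKne : K.Nonempty := by
    obtain ⟨x, hx⟩ := hs
    exact ⟨q x, subset_convexHull _ _ (by simpa using ⟨x, hx, rfl⟩)⟩
  have hfc : Continuous f := by
    refine continuous_iff_continuousAt.mpr fun w => ?_
    refine ContinuousAt.finset_sup'_apply hs fun x _ => ?_
    exact (((continuous_id.sub continuous_const).norm.pow 2).sub
      continuous_const).continuousAt
  obtain ⟨w₀, hw₀K, hw₀min⟩ := hKcpt.exists_isMinOn hKne hfc.continuousOn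
  suffices hle : f w₀ ≤ 0 by
    refine ⟨w₀, fun x hx => ?_⟩
    have h1 : g w₀ x ≤ f w₀ := Finset.le_sup' (fun x => g w₀ x) hx
    have h2 : ‖w₀ - q x‖ ^ 2 ≤ r x ^ 2 := by
      have : g w₀ x = ‖w₀ - q x‖ ^ 2 - r x ^ 2 := rfl
      linarith [this ▸ le_trans h1 hle]
    have hrnn : 0 ≤ r x := norm_nonneg _
    nlinarith [norm_nonneg (w₀ - q x)]
  by_contra hpos
  push_neg at hpos
  set m : ℝ := f w₀ with hm
  have hmem_le : ∀ x ∈ s, g w₀ x ≤ m := fun x hx => Finset.le_sup' (fun x => g w₀ x) hx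
  set A : Finset X := s.filter (fun x => g w₀ x = m) with hA
  have hAs : A ⊆ s := Finset.filter_subset _ _
  have hAne : A.Nonempty := by
    obtain ⟨x, hx, hxe⟩ := Finset.exists_mem_eq_sup' hs (fun x => g w₀ x)
    exact ⟨x, Finset.mem_filter.mpr ⟨hx, hxe.symm⟩⟩
  set B : Finset X := A.image q with hB
  by_cases hwB : w₀ ∈ convexHull ℝ (↑B : Set X)
  · -- `w₀` is a convex combination of active ball centres: quadratic contradiction
    obtain ⟨lam, hlam0, hlam1, hlamc⟩ := Finset.mem_convexHull'.mp hwB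
    have hrep : ∀ y ∈ B, ∃ x, x ∈ A ∧ q x = y := by
      intro y hy
      obtain ⟨x, hx, hxe⟩ := Finset.mem_image.mp hy
      exact ⟨x, hx, hxe⟩
    set xr : X → X := fun y => if h : ∃ x, x ∈ A ∧ q x = y then h.choose else 0 with hxr
    have hxrA : ∀ y ∈ B, xr y ∈ A ∧ q (xr y) = y := by
      intro y hy
      have h := hrep y hy
      simp only [hxr, dif_pos h]
      exact h.choose_spec
    set b : X → X := fun y => y - w₀ with hb
    set a : X → X := fun y => p (xr y) - z with ha
    have hb0 : ∑ y ∈ B, lam y • b y = 0 := by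
      have : ∑ y ∈ B, lam y • b y
          = (∑ y ∈ B, lam y • y) - (∑ y ∈ B, lam y) • w₀ := by
        rw [Finset.sum_smul, ← Finset.sum_sub_distrib]
        exact Finset.sum_congr rfl fun y _ => smul_sub _ _ _
      rw [this, hlamc, hlam1, one_smul, sub_self]
    have hbnorm : ∀ y ∈ B, ‖b y‖ ^ 2 = m + ‖a y‖ ^ 2 := by
      intro y hy
      obtain ⟨hyA, hyq⟩ := hxrA y hy
      have hact : g w₀ (xr y) = m := (Finset.mem_filter.mp hyA).2
      have h1 : ‖b y‖ = ‖w₀ - q (xr y)‖ := by rw [hyq, hb, norm_sub_rev]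
      have h2 : ‖a y‖ = r (xr y) := by rw [ha, hr, norm_sub_rev]
      rw [h1, h2]
      have : ‖w₀ - q (xr y)‖ ^ 2 - r (xr y) ^ 2 = m := hact
      linarith
    have hba : ∀ y ∈ B, ∀ y' ∈ B, ‖b y - b y'‖ ≤ ‖a y - a y'‖ := by
      intro y hy y' hy'
      obtain ⟨_, hyq⟩ := hxrA y hy
      obtain ⟨_, hyq'⟩ := hxrA y' hy'
      have e1 : b y - b y' = q (xr y) - q (xr y') := by
        rw [hb]; simp only []; rw [hyq, hyq']; abel
      have e2 : a y - a y' = p (xr y) - p (xr y') := by rw [ha]; simp only [sub_sub_sub_cancel_right]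
      rw [e1, e2]
      exact hpq _ _
    have id_b := minty_sum_identity B lam b hlam1
    have id_a := minty_sum_identity B lam a hlam1
    rw [hb0] at id_b
    simp only [norm_zero] at id_b
    have hmono : ∑ y ∈ B, ∑ y' ∈ B, lam y * lam y' * ‖b y - b y'‖ ^ 2
        ≤ ∑ y ∈ B, ∑ y' ∈ B, lam y * lam y' * ‖a y - a y'‖ ^ 2 := by
      refine Finset.sum_le_sum fun y hy => Finset.sum_le_sum fun y' hy' => ?_
      have h1 := hba y hy y' hy'
      have h2 : ‖b y - b y'‖ ^ 2 ≤ ‖a y - a y'‖ ^ 2 := by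
        nlinarith [norm_nonneg (b y - b y'), norm_nonneg (a y - a y')]
      exact mul_le_mul_of_nonneg_left h2 (mul_nonneg (hlam0 y hy) (hlam0 y' hy'))
    have hSb : ∑ y ∈ B, lam y * ‖b y‖ ^ 2
        = m + ∑ y ∈ B, lam y * ‖a y‖ ^ 2 := by
      have : ∑ y ∈ B, lam y * ‖b y‖ ^ 2
          = ∑ y ∈ B, (lam y * m + lam y * ‖a y‖ ^ 2) := by
        refine Finset.sum_congr rfl fun y hy => ?_
        rw [hbnorm y hy]; ring
      rw [this, Finset.sum_add_distrib, ← Finset.sum_mul, hlam1, one_mul]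
    nlinarith [norm_nonneg (∑ y ∈ B, lam y • a y), sq_nonneg ‖∑ y ∈ B, lam y • a y‖]
  · -- separate `w₀` from the hull of active centres and perturb: contradicts minimality
    have hBconv : Convex ℝ (convexHull ℝ (↑B : Set X)) := convex_convexHull _ _
    have hBcpt : IsCompact (convexHull ℝ (↑B : Set X)) :=
      B.finite_toSet.isCompact_convexHull ℝ
    have hBne : (convexHull ℝ (↑B : Set X)).Nonempty := by
      obtain ⟨x, hx⟩ := hAne
      exact ⟨q x, subset_convexHull _ _ (by simpa [hB] using ⟨x, hx, rfl⟩)⟩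
    obtain ⟨pp, hppK, hppmin⟩ := exists_norm_eq_iInf_of_complete_convex hBne
      hBcpt.isClosed.isComplete hBconv w₀
    have hchar := (norm_eq_iInf_iff_real_inner_le_zero hBconv hppK).mp hppmin
    set v : X := pp - w₀ with hv
    have hvne : v ≠ 0 := by
      rw [hv, sub_ne_zero]
      intro he
      exact hwB (he ▸ hppK)
    have hv2 : 0 < ‖v‖ ^ 2 := by
      have := norm_pos_iff.mpr hvne
      positivity
    have hact : ∀ x ∈ A, ‖v‖ ^ 2 ≤ ⟪q x - w₀, v⟫ := by
      intro x hx
      have hqB : q x ∈ convexHull ℝ (↑B : Set X) :=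
        subset_convexHull _ _ (by simpa [hB] using ⟨x, hx, rfl⟩)
      have h1 := hchar (q x) hqB
      have e9 : q x - w₀ = (q x - pp) + v := by rw [hv]; abel
      have h2 : ⟪q x - pp, v⟫ = -⟪w₀ - pp, q x - pp⟫ := by
        rw [real_inner_comm, hv, ← neg_sub w₀ pp, inner_neg_left]
      rw [e9, inner_add_left, real_inner_self_eq_norm_sq, h2]
      linarith
    set t : ℝ := min 1 (s.inf' hs fun x =>
      if g w₀ x < m ∧ 0 < 2 * ⟪w₀ - q x, v⟫ + ‖v‖ ^ 2
      then (m - g w₀ x) / (2 * (2 * ⟪w₀ - q x, v⟫ + ‖v‖ ^ 2)) else 1) with htdef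
    have ht0 : 0 < t := by
      refine lt_min one_pos ?_
      rw [Finset.lt_inf'_iff]
      intro x hx
      by_cases hcase : g w₀ x < m ∧ 0 < 2 * ⟪w₀ - q x, v⟫ + ‖v‖ ^ 2
      · rw [if_pos hcase]
        exact div_pos (by linarith [hcase.1]) (by linarith [hcase.2])
      · rw [if_neg hcase]; exact one_pos
    have ht1 : t ≤ 1 := min_le_left _ _
    have hwtK : w₀ + t • v ∈ K := by
      have e : w₀ + t • v = (1 - t) • w₀ + t • pp := by
        rw [hv]; module
      rw [e]
      have hppK' : pp ∈ K := by
        refine convexHull_mono ?_ hppK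
        intro y hy
        obtain ⟨x, hx, hxe⟩ := Finset.mem_image.mp (by exact_mod_cast hy)
        exact_mod_cast Finset.mem_image.mpr ⟨x, hAs hx, hxe⟩
      exact hKconv hw₀K hppK' (by linarith) ht0.le (by ring)
    have hlt : f (w₀ + t • v) < m := by
      rw [hf]
      rw [Finset.sup'_lt_iff]
      intro x hx
      have expand : g (w₀ + t • v) x
          = g w₀ x + t * (2 * ⟪w₀ - q x, v⟫ + t * ‖v‖ ^ 2) := by
        have e : w₀ + t • v - q x = (w₀ - q x) + t • v := by abel
        simp only [hg]
        rw [e, norm_add_sq_real, real_inner_smul_right, norm_smul]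
        rw [Real.norm_eq_abs, mul_pow, sq_abs]
        ring
      rw [expand]
      rcases (hmem_le x hx).eq_or_lt with heq | hlt'
      · -- active point
        have hxA : x ∈ A := Finset.mem_filter.mpr ⟨hx, heq⟩
        have hq := hact x hxA
        have e : ⟪w₀ - q x, v⟫ = -⟪q x - w₀, v⟫ := by
          rw [← inner_neg_left, neg_sub]
        rw [heq, e]
        nlinarith [mul_le_mul_of_nonneg_left hq ht0.le,
          mul_nonneg (mul_nonneg (sub_nonneg.mpr ht1) ht0.le) hv2.le,
          mul_pos ht0 hv2]
      · -- inactive point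
        have hcc : t * (2 * ⟪w₀ - q x, v⟫ + t * ‖v‖ ^ 2)
            ≤ t * (2 * ⟪w₀ - q x, v⟫ + ‖v‖ ^ 2) := by
          nlinarith [mul_nonneg (mul_nonneg (sub_nonneg.mpr ht1) ht0.le) hv2.le]
        by_cases hcpos : 0 < 2 * ⟪w₀ - q x, v⟫ + ‖v‖ ^ 2
        · have hτ : t ≤ (m - g w₀ x) / (2 * (2 * ⟪w₀ - q x, v⟫ + ‖v‖ ^ 2)) := by
            have h1 : t ≤ s.inf' hs fun x' =>
                if g w₀ x' < m ∧ 0 < 2 * ⟪w₀ - q x', v⟫ + ‖v‖ ^ 2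
                then (m - g w₀ x') / (2 * (2 * ⟪w₀ - q x', v⟫ + ‖v‖ ^ 2)) else 1 :=
              min_le_right _ _
            have h2 := Finset.inf'_le (b := x) (fun x' =>
                if g w₀ x' < m ∧ 0 < 2 * ⟪w₀ - q x', v⟫ + ‖v‖ ^ 2
                then (m - g w₀ x') / (2 * (2 * ⟪w₀ - q x', v⟫ + ‖v‖ ^ 2)) else 1) hx
            rw [if_pos ⟨hlt', hcpos⟩] at h2
            exact le_trans h1 h2
          rw [le_div_iff₀ (by linarith : (0:ℝ) < 2 * (2 * ⟪w₀ - q x, v⟫ + ‖v‖ ^ 2))] at hτ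
          linarith
        · push_neg at hcpos
          have : t * (2 * ⟪w₀ - q x, v⟫ + ‖v‖ ^ 2) ≤ 0 :=
            mul_nonpos_of_nonneg_of_nonpos ht0.le hcpos
          linarith
    have h5 : f w₀ ≤ f (w₀ + t • v) := hw₀min hwtK
    linarith

/-- All-points version, by a directed limit argument. -/
lemma minty_all_balls [CompleteSpace X] (z : X) (p q : X → X)
    (hpq : ∀ a b : X, ‖q a - q b‖ ≤ ‖p a - p b‖) :
    ∃ w : X, ∀ x : X, ‖w - q x‖ ≤ ‖z - p x‖ := by
  classical
  set r : X → ℝ := fun x => ‖z - p x‖ with hr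
  set C : Finset X → Set X := fun T => {w | ∀ x ∈ T, ‖w - q x‖ ≤ r x} with hC
  have hCconv : ∀ T, Convex ℝ (C T) := by
    intro T u hu v hv α β hα hβ hαβ
    intro x hx
    have e : α • (u - q x) + β • (v - q x) = α • u + β • v - (α + β) • q x := by
      module
    rw [hαβ, one_smul] at e
    rw [← e]
    calc ‖α • (u - q x) + β • (v - q x)‖
        ≤ ‖α • (u - q x)‖ + ‖β • (v - q x)‖ := norm_add_le _ _
      _ = α * ‖u - q x‖ + β * ‖v - q x‖ := by
          rw [norm_smul, norm_smul, Real.norm_eq_abs, Real.norm_eq_abs,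
            abs_of_nonneg hα, abs_of_nonneg hβ]
      _ ≤ α * r x + β * r x := by
          have := hu x hx
          have := hv x hx
          have h1 : α * ‖u - q x‖ ≤ α * r x := mul_le_mul_of_nonneg_left (hu x hx) hα
          have h2 : β * ‖v - q x‖ ≤ β * r x := mul_le_mul_of_nonneg_left (hv x hx) hβ
          linarith
      _ = r x := by rw [← add_mul, hαβ, one_mul]
  have hCclosed : ∀ T, IsClosed (C T) := by
    intro T
    have e : C T = ⋂ x ∈ T, {w : X | ‖w - q x‖ ≤ r x} := by
      ext w; simp [hC]
    rw [e]
    exact isClosed_biInter fun x _ =>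
      isClosed_le ((continuous_id.sub continuous_const).norm) continuous_const
  have hCne : ∀ T : Finset X, (C T).Nonempty := by
    intro T
    obtain ⟨w, hw⟩ := minty_finite_balls z p q hpq T
    exact ⟨w, hw⟩
  have hCmono : ∀ {T T' : Finset X}, T ⊆ T' → C T' ⊆ C T :=
    fun h w hw x hx => hw x (h hx)
  have hmin : ∀ T : Finset X, ∃ w ∈ C T, ∀ u ∈ C T, ‖w‖ ≤ ‖u‖ := by
    intro T
    obtain ⟨w, hwC, hwmin⟩ := exists_norm_eq_iInf_of_complete_convex (hCne T)
      (hCclosed T).isComplete (hCconv T) 0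
    refine ⟨w, hwC, fun u hu => ?_⟩
    have h1 : ‖(0:X) - w‖ ≤ ‖(0:X) - u‖ := by
      rw [hwmin]
      exact ciInf_le ⟨0, Set.forall_mem_range.2 fun _ => norm_nonneg _⟩
        (⟨u, hu⟩ : C T)
    simpa [zero_sub, norm_neg] using h1
  choose mw hmwC hmwmin using hmin
  -- the key parallelogram estimate between minimal points of nested constraint sets
  have hdist : ∀ T1 T2 : Finset X, T1 ⊆ T2 →
      ‖mw T1 - mw T2‖ ^ 2 ≤ 2 * ‖mw T2‖ ^ 2 - 2 * ‖mw T1‖ ^ 2 := by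
    intro T1 T2 hT
    have h2C : mw T2 ∈ C T1 := hCmono hT (hmwC T2)
    have hmid : ((1:ℝ)/2) • mw T1 + ((1:ℝ)/2) • mw T2 ∈ C T1 :=
      (hCconv T1) (hmwC T1) h2C (by norm_num) (by norm_num) (by norm_num)
    have hmin1 : ‖mw T1‖ ≤ ‖((1:ℝ)/2) • mw T1 + ((1:ℝ)/2) • mw T2‖ :=
      hmwmin T1 _ hmid
    have e : ((1:ℝ)/2) • mw T1 + ((1:ℝ)/2) • mw T2
        = ((1:ℝ)/2) • (mw T1 + mw T2) := by rw [smul_add]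
    rw [e, norm_smul, Real.norm_eq_abs] at hmin1
    have habs : |(1:ℝ)/2| = (1:ℝ)/2 := by norm_num
    rw [habs] at hmin1
    have hpar : ‖mw T1 + mw T2‖ ^ 2 + ‖mw T1 - mw T2‖ ^ 2
        = 2 * ‖mw T1‖ ^ 2 + 2 * ‖mw T2‖ ^ 2 := by
      rw [norm_add_sq_real, norm_sub_sq_real]
      ring
    nlinarith [norm_nonneg (mw T1), norm_nonneg (mw T1 + mw T2)]
  set φ : Finset X → ℝ := fun T => ‖mw (insert 0 T)‖ with hφ
  have hφbd : ∀ T, φ T ≤ ‖q 0‖ + r 0 := by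
    intro T
    have h1 : ‖mw (insert 0 T) - q 0‖ ≤ r 0 :=
      hmwC (insert 0 T) 0 (Finset.mem_insert_self 0 T)
    have e0 : mw (insert 0 T) = mw (insert 0 T) - q 0 + q 0 := by abel
    calc φ T = ‖mw (insert 0 T) - q 0 + q 0‖ := by rw [hφ, ← e0]
      _ ≤ ‖mw (insert 0 T) - q 0‖ + ‖q 0‖ := norm_add_le _ _
      _ ≤ ‖q 0‖ + r 0 := by linarith
  have hφmono : ∀ {T T' : Finset X}, T ⊆ T' → φ T ≤ φ T' := by
    intro T T' h
    exact hmwmin (insert 0 T) _ (hCmono (Finset.insert_subset_insert 0 h)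
      (hmwC (insert 0 T')))
  set D : ℝ := sSup (Set.range φ) with hD
  have hrange_ne : (Set.range φ).Nonempty := ⟨φ ∅, ⟨∅, rfl⟩⟩
  have hbdd : BddAbove (Set.range φ) := by
    refine ⟨‖q 0‖ + r 0, ?_⟩
    rintro _ ⟨T, rfl⟩
    exact hφbd T
  have hφleD : ∀ T, φ T ≤ D := fun T => le_csSup hbdd ⟨T, rfl⟩
  have hD0 : 0 ≤ D := le_trans (norm_nonneg _) (hφleD ∅)
  have hTn : ∀ n : ℕ, ∃ T : Finset X, D - 1/(n+1) < φ T := by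
    intro n
    have h1 : D - 1/(n+1) < D := by
      have : (0:ℝ) < 1/(n+1) := by positivity
      linarith
    obtain ⟨_, ⟨T, rfl⟩, hT⟩ := exists_lt_of_lt_csSup hrange_ne h1
    exact ⟨T, hT⟩
  choose T hT using hTn
  set S : ℕ → Finset X := fun n => (Finset.range (n+1)).biUnion T with hS
  have hTS : ∀ n, T n ⊆ S n := fun n =>
    Finset.subset_biUnion_of_mem T (Finset.self_mem_range_succ n)
  have hSmono : ∀ {n m : ℕ}, n ≤ m → S n ⊆ S m := by
    intro n m h
    exact Finset.biUnion_subset_biUnion_of_subset_left T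
      (Finset.range_subset_range.mpr (by omega))
  set w : ℕ → X := fun n => mw (insert 0 (S n)) with hwdef
  have hwD : ∀ n, ‖w n‖ ≤ D := fun n => hφleD (S n)
  have hwlow : ∀ n, D - 1/(n+1) < ‖w n‖ := fun n =>
    lt_of_lt_of_le (hT n) (hφmono (hTS n))
  have hwest : ∀ {n m : ℕ}, n ≤ m → ‖w n - w m‖ ^ 2 ≤ 2*(2*D+1) * (1/(n+1)) := by
    intro n m h
    have h1 := hdist (insert 0 (S n)) (insert 0 (S m))
      (Finset.insert_subset_insert 0 (hSmono h))
    have h1' : ‖w n - w m‖ ^ 2 ≤ 2 * ‖w m‖ ^ 2 - 2 * ‖w n‖ ^ 2 := h1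
    have h2 := hwD n
    have h3 := hwD m
    have h4 := hwlow n
    have h5 : (0:ℝ) < 1/(n+1) := by positivity
    have h6 : ‖w m‖ ^ 2 ≤ D ^ 2 := pow_le_pow_left₀ (norm_nonneg _) h3 2
    have h7 : (D - ‖w n‖) * (D + ‖w n‖) ≤ (1/(n+1)) * (D + ‖w n‖) := by
      apply mul_le_mul_of_nonneg_right (by linarith)
      linarith [norm_nonneg (w n)]
    have h8 : (1/((n:ℝ)+1)) * (D + ‖w n‖) ≤ (1/(n+1)) * (2*D+1) := by
      apply mul_le_mul_of_nonneg_left ?_ h5.le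
      linarith
    nlinarith [h1', h6, h7, h8]
  have hsqrt : ∀ {n m : ℕ}, n ≤ m →
      ‖w n - w m‖ ≤ Real.sqrt (2*(2*D+1) * (1/(n+1))) := by
    intro n m h
    have h1 := hwest h
    calc ‖w n - w m‖ = Real.sqrt (‖w n - w m‖ ^ 2) :=
          (Real.sqrt_sq (norm_nonneg _)).symm
      _ ≤ Real.sqrt (2*(2*D+1) * (1/(n+1))) := Real.sqrt_le_sqrt h1
  have hb0 : Filter.Tendsto (fun n : ℕ => Real.sqrt (2*(2*D+1) * (1/(n+1))))
      Filter.atTop (nhds 0) := by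
    have h1 : Filter.Tendsto (fun n : ℕ => 2*(2*D+1) * (1/(n+1:ℝ)))
        Filter.atTop (nhds 0) := by
      have := tendsto_one_div_add_atTop_nhds_zero_nat.const_mul (2*(2*D+1))
      simpa using this
    have h2 := (Real.continuous_sqrt.tendsto 0).comp h1
    simpa [Function.comp_def] using h2
  have hcauchy : CauchySeq w := by
    refine cauchySeq_of_le_tendsto_0
      (fun n => 2 * Real.sqrt (2*(2*D+1) * (1/(n+1)))) ?_ ?_
    · intro n m N hn hm
      have h1 : dist (w n) (w N) ≤ Real.sqrt (2*(2*D+1) * (1/(N+1))) := by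
        rw [dist_eq_norm, norm_sub_rev]
        exact hsqrt hn
      have h2 : dist (w N) (w m) ≤ Real.sqrt (2*(2*D+1) * (1/(N+1))) := by
        rw [dist_eq_norm]
        exact hsqrt hm
      calc dist (w n) (w m) ≤ dist (w n) (w N) + dist (w N) (w m) := dist_triangle _ _ _
        _ ≤ 2 * Real.sqrt (2*(2*D+1) * (1/(N+1))) := by linarith
    · simpa using hb0.const_mul 2
  obtain ⟨wl, hwl⟩ := cauchySeq_tendsto_of_complete hcauchy
  refine ⟨wl, fun x => ?_⟩
  -- augmented minimal points converge to the same limit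
  set w' : ℕ → X := fun n => mw (insert 0 (insert x (S n))) with hw'def
  have hw'D : ∀ n, ‖w' n‖ ≤ D := fun n => hφleD (insert x (S n))
  have hw'est : ∀ n, ‖w n - w' n‖ ^ 2 ≤ 2*(2*D+1) * (1/(n+1)) := by
    intro n
    have h1 := hdist (insert 0 (S n)) (insert 0 (insert x (S n)))
      (Finset.insert_subset_insert 0 (Finset.subset_insert x (S n)))
    have h1' : ‖w n - w' n‖ ^ 2 ≤ 2 * ‖w' n‖ ^ 2 - 2 * ‖w n‖ ^ 2 := h1
    have h4 := hwlow n
    have h2 := hw'D n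
    have h3 := hwD n
    have h5 : (0:ℝ) < 1/(n+1) := by positivity
    have h6 : ‖w' n‖ ^ 2 ≤ D ^ 2 := pow_le_pow_left₀ (norm_nonneg _) h2 2
    have h7 : (D - ‖w n‖) * (D + ‖w n‖) ≤ (1/(n+1)) * (D + ‖w n‖) := by
      apply mul_le_mul_of_nonneg_right (by linarith)
      linarith [norm_nonneg (w n)]
    have h8 : (1/((n:ℝ)+1)) * (D + ‖w n‖) ≤ (1/(n+1)) * (2*D+1) := by
      apply mul_le_mul_of_nonneg_left ?_ h5.le
      linarith
    nlinarith [h1', h6, h7, h8]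
  have hw'lim : Filter.Tendsto w' Filter.atTop (nhds wl) := by
    refine Filter.Tendsto.congr_dist hwl ?_
    have hle : ∀ n, dist (w n) (w' n) ≤ Real.sqrt (2*(2*D+1) * (1/(n+1))) := by
      intro n
      rw [dist_eq_norm]
      calc ‖w n - w' n‖ = Real.sqrt (‖w n - w' n‖ ^ 2) :=
            (Real.sqrt_sq (norm_nonneg _)).symm
        _ ≤ Real.sqrt (2*(2*D+1) * (1/(n+1))) := Real.sqrt_le_sqrt (hw'est n)
    exact squeeze_zero (fun n => dist_nonneg) hle hb0
  have hfinal : ∀ n, ‖w' n - q x‖ ≤ r x := by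
    intro n
    exact hmwC (insert 0 (insert x (S n))) x
      (Finset.mem_insert_of_mem (Finset.mem_insert_self x (S n)))
  have hcont : Filter.Tendsto (fun n => ‖w' n - q x‖) Filter.atTop
      (nhds ‖wl - q x‖) :=
    ((continuous_id.sub continuous_const).norm.tendsto wl).comp hw'lim
  exact le_of_tendsto hcont (Filter.Eventually.of_forall hfinal)

/-- Surjectivity of `x ↦ x + σ x` for a continuous monotone `σ`. -/
lemma minty_surjective [CompleteSpace X] (σ : X → X)
    (hσ_cont : Continuous σ)
    (hσ_mono : ∀ x y : X, 0 ≤ ⟪σ x - σ y, x - y⟫) (z : X) :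
    ∃ h : X, h + σ h = z := by
  -- `F (x + σ x) = x - σ x` is nonexpansive, by monotonicity
  have hpq : ∀ a b : X, ‖(a - σ a) - (b - σ b)‖ ≤ ‖(a + σ a) - (b + σ b)‖ := by
    intro a b
    have e1 : (a - σ a) - (b - σ b) = (a - b) - (σ a - σ b) := by abel
    have e2 : (a + σ a) - (b + σ b) = (a - b) + (σ a - σ b) := by abel
    rw [e1, e2]
    have h1 : ‖(a - b) - (σ a - σ b)‖ ^ 2 ≤ ‖(a - b) + (σ a - σ b)‖ ^ 2 := by
      rw [norm_sub_sq_real, norm_add_sq_real]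
      have := hσ_mono a b
      rw [real_inner_comm] at this
      nlinarith
    nlinarith [norm_nonneg ((a - b) - (σ a - σ b)), norm_nonneg ((a - b) + (σ a - σ b))]
  obtain ⟨w, hw⟩ := minty_all_balls z (fun x => x + σ x) (fun x => x - σ x) hpq
  set h : X := ((1:ℝ)/2) • (z + w) with hh
  set k : X := ((1:ℝ)/2) • (z - w) with hk
  -- key monotonicity-type inequality for the pair (h, k)
  have hkey : ∀ x : X, 0 ≤ ⟪k - σ x, h - x⟫ := by
    intro x
    have hball := hw x
    have e1 : w - (x - σ x) = (h - x) - (k - σ x) := by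
      rw [hh, hk]; module
    have e2 : z - (x + σ x) = (h - x) + (k - σ x) := by
      rw [hh, hk]; module
    rw [e1, e2] at hball
    have hsq : ‖(h - x) - (k - σ x)‖ ^ 2 ≤ ‖(h - x) + (k - σ x)‖ ^ 2 := by
      nlinarith [norm_nonneg ((h - x) - (k - σ x)), norm_nonneg ((h - x) + (k - σ x))]
    rw [norm_sub_sq_real, norm_add_sq_real] at hsq
    rw [real_inner_comm]
    nlinarith
  -- maximality: `k = σ h`
  have hmax : k = σ h := by
    by_contra hne
    set v : X := k - σ h with hv
    have hvne : v ≠ 0 := by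
      rw [hv, sub_ne_zero]; exact hne
    -- consider x = h + t • v for t → 0
    have hlim : Filter.Tendsto (fun t : ℝ => ⟪k - σ (h + t • v), v⟫)
        (nhdsWithin 0 (Set.Ioi 0)) (nhds ⟪k - σ h, v⟫) := by
      have hc : Continuous fun t : ℝ => ⟪k - σ (h + t • v), v⟫ := by
        have hc1 : Continuous fun t : ℝ => h + t • v :=
          continuous_const.add (continuous_id.smul continuous_const)
        exact (continuous_const.sub (hσ_cont.comp hc1)).inner continuous_const
      have := (hc.tendsto 0).mono_left (nhdsWithin_le_nhds (s := Set.Ioi (0:ℝ)))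
      simpa using this
    have hle : ∀ t ∈ Set.Ioi (0:ℝ), ⟪k - σ (h + t • v), v⟫ ≤ 0 := by
      intro t ht
      have := hkey (h + t • v)
      have e : h - (h + t • v) = -(t • v) := by abel
      rw [e, inner_neg_right, inner_smul_right] at this
      have : 0 ≤ -(t * ⟪k - σ (h + t • v), v⟫) := by linarith [this]
      have ht' : (0:ℝ) < t := ht
      nlinarith
    have hfin : ⟪k - σ h, v⟫ ≤ 0 :=
      le_of_tendsto hlim (Filter.eventually_iff_exists_mem.mpr
        ⟨Set.Ioi 0, self_mem_nhdsWithin, hle⟩)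
    rw [hv] at hfin
    have : ‖k - σ h‖ ^ 2 ≤ 0 := by
      rw [← real_inner_self_eq_norm_sq]; exact hfin
    have : k - σ h = 0 := by
      have := norm_nonneg (k - σ h)
      have h0 : ‖k - σ h‖ = 0 := by nlinarith
      simpa using h0
    exact hvne (by rw [hv]; exact this)
  refine ⟨h, ?_⟩
  rw [← hmax, hh, hk]
  module

end Aux

/-- Let `X` be a real Hilbert space and `σ : X → X` a continuous monotone operator mapping
bounded sets to bounded sets. Then `H(x) := x + σ(x)` is a bijection from `X` onto `X`
admitting a continuous inverse. -/
theorem continuous_inverse_of_id_add_monotone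
    {X : Type*} [NormedAddCommGroup X] [InnerProductSpace ℝ X] [CompleteSpace X]
    (σ : X → X)
    (hσ_cont : Continuous σ)
    (hσ_mono : ∀ x y : X, 0 ≤ ⟪σ x - σ y, x - y⟫)
    (hσ_bdd : ∀ s : Set X, IsBounded s → IsBounded (σ '' s)) :
    Function.Bijective (fun x : X => x + σ x) ∧
      ∃ Hinv : X → X, Continuous Hinv ∧
        (∀ x : X, Hinv (x + σ x) = x) ∧ (∀ y : X, Hinv y + σ (Hinv y) = y) := by
  -- expansivity of `H`
  have key : ∀ x y : X, ‖x - y‖ ≤ ‖(x + σ x) - (y + σ y)‖ := by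
    intro x y
    rcases eq_or_ne x y with rfl | hne
    · simp
    have h1 : ‖x - y‖ ^ 2 ≤ ⟪(x + σ x) - (y + σ y), x - y⟫ := by
      have : ⟪(x + σ x) - (y + σ y), x - y⟫ = ⟪x - y, x - y⟫ + ⟪σ x - σ y, x - y⟫ := by
        rw [← inner_add_left]
        congr 1
        abel
      rw [this, real_inner_self_eq_norm_sq]
      nlinarith [hσ_mono x y]
    have h2 : ⟪(x + σ x) - (y + σ y), x - y⟫ ≤ ‖(x + σ x) - (y + σ y)‖ * ‖x - y‖ :=
      real_inner_le_norm _ _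
    have hxy : 0 < ‖x - y‖ := by
      rw [norm_pos_iff]; exact sub_ne_zero.mpr hne
    nlinarith
  have hsurj : ∀ z : X, ∃ h : X, h + σ h = z := minty_surjective σ hσ_cont hσ_mono
  have hinj : Function.Injective (fun x : X => x + σ x) := by
    intro x y hxy
    simp only at hxy
    have := key x y
    rw [hxy] at this
    have h0 : ‖x - y‖ ≤ 0 := by simpa using this
    have : x - y = 0 := by
      simpa using le_antisymm h0 (norm_nonneg _)
    exact sub_eq_zero.mp this
  choose Hinv hHinv using hsurj
  refine ⟨⟨hinj, fun z => ⟨Hinv z, hHinv z⟩⟩, Hinv, ?_, ?_, hHinv⟩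
  · -- continuity: `Hinv` is 1-Lipschitz
    have : LipschitzWith 1 Hinv := by
      refine LipschitzWith.of_dist_le_mul fun a b => ?_
      have := key (Hinv a) (Hinv b)
      rw [hHinv a, hHinv b] at this
      simpa [dist_eq_norm] using this
    exact this.continuous
  · intro x
    exact hinj (by simpa using hHinv (x + σ x))
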